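/- Let G = (N, E) be a spatial network, ω ⊆ Ω a subset, H > 0, and let φ : ℝ^d → ℝ satisfy 0 ≤ φ(z) ≤ 1 for all z and |φ(x) − φ(y)| ≤ H^{−1}|x − y| for all adjacent nodes x ∼ y. Then for every v : N → ℝ, the pointwise product vφ (defined by (vφ)(x) = v(x)φ(x) on N) satisfies |vφ|²_{L,ω} ≤ 2(H^{−2}|v|²_{M,ω} + |v|²_{L,ω}). -/

import Mathlib

noncomputable section
open scoped Classical BigOperators

namespace NetPaper

/-- Euclidean distance between two points of `ℝ^d` (represented as `Fin d → ℝ`). -/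
def eDist {d : ℕ} (x y : Fin d → ℝ) : ℝ := Real.sqrt (∑ i, (x i - y i) ^ 2)

/-- A spatial network: a finite connected graph whose nodes are points of the
hyper-rectangle `Ω = [0,l 1] × ⋯ × [0,l d]`. -/
structure SpatialNetwork (d : ℕ) where
  l : Fin d → ℝ
  l_pos : ∀ i, 0 < l i
  N : Finset (Fin d → ℝ)
  Adj : (Fin d → ℝ) → (Fin d → ℝ) → Prop
  adj_symm : ∀ x y, Adj x y → Adj y x
  adj_mem : ∀ x y, Adj x y → x ∈ N ∧ y ∈ N
  adj_ne : ∀ x y, Adj x y → x ≠ y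
  mem_domain : ∀ x ∈ N, ∀ i, 0 ≤ x i ∧ x i ≤ l i
  connected : ∀ x ∈ N, ∀ y ∈ N, Relation.ReflTransGen Adj x y

namespace SpatialNetwork

variable {d : ℕ}

/-- The hyper-rectangle `Ω`. -/
def domain (G : SpatialNetwork d) : Set (Fin d → ℝ) :=
  {z | ∀ i, 0 ≤ z i ∧ z i ≤ G.l i}

/-- The box `B_R(x)`, half open, but closed to the right in direction `i`
whenever `x i + R = l i`. -/
def box (G : SpatialNetwork d) (R : ℝ) (x : Fin d → ℝ) : Set (Fin d → ℝ) :=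
  {z | ∀ i, x i - R ≤ z i ∧ (z i < x i + R ∨ (x i + R = G.l i ∧ z i ≤ x i + R))}

/-- The nodes lying in a subset `ω ⊆ Ω`. -/
def nodes (G : SpatialNetwork d) (ω : Set (Fin d → ℝ)) : Finset (Fin d → ℝ) :=
  G.N.filter (· ∈ ω)

/-- The neighbours of a node. -/
def nbhd (G : SpatialNetwork d) (x : Fin d → ℝ) : Finset (Fin d → ℝ) :=
  G.N.filter (G.Adj x)

/-- The diagonal mass `m_x = ½ Σ_{y∼x} |x−y|` at a node. -/
def mass (G : SpatialNetwork d) (x : Fin d → ℝ) : ℝ :=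
  (1 / 2) * ∑ y ∈ G.nbhd x, eDist x y

/-- The bilinear form `(M_ω u, v)`. -/
def Mbil (G : SpatialNetwork d) (ω : Set (Fin d → ℝ)) (u v : (Fin d → ℝ) → ℝ) : ℝ :=
  ∑ x ∈ G.nodes ω, G.mass x * u x * v x

/-- `|v|²_{M,ω}`. -/
def Msq (G : SpatialNetwork d) (ω : Set (Fin d → ℝ)) (v : (Fin d → ℝ) → ℝ) : ℝ :=
  G.Mbil ω v v

/-- `|v|²_{L,ω}`. -/
def Lsq (G : SpatialNetwork d) (ω : Set (Fin d → ℝ)) (v : (Fin d → ℝ) → ℝ) : ℝ :=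
  ∑ x ∈ G.nodes ω, (1 / 2) * ∑ y ∈ G.nbhd x, (v x - v y) ^ 2 / eDist x y

/-- `|v|_{M,ω}`. -/
def Mnorm (G : SpatialNetwork d) (ω : Set (Fin d → ℝ)) (v : (Fin d → ℝ) → ℝ) : ℝ :=
  Real.sqrt (G.Msq ω v)

/-- `|v|_{L,ω}`. -/
def Lnorm (G : SpatialNetwork d) (ω : Set (Fin d → ℝ)) (v : (Fin d → ℝ) → ℝ) : ℝ :=
  Real.sqrt (G.Lsq ω v)

/-- Membership in `V`: vanishing at the Dirichlet nodes `N ∩ Γ`. -/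
def memV (G : SpatialNetwork d) (Γ : Set (Fin d → ℝ)) (v : (Fin d → ℝ) → ℝ) : Prop :=
  ∀ x ∈ G.N, x ∈ Γ → v x = 0

/-- Assumption 3.1: homogeneity, locality, boundary density and connectivity at
scale `R₀`, with uniformity constant `σ` and density `ρ`. -/
structure Assumptions (G : SpatialNetwork d) (Γ : Set (Fin d → ℝ)) (R₀ σ ρ : ℝ) : Prop where
  R₀_pos : 0 < R₀
  σ_ge_one : 1 ≤ σ
  ρ_pos : 0 < ρ
  homogeneity_lower : ∀ R, R₀ ≤ R → ∀ x ∈ G.domain,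
    ρ ≤ G.Msq (G.box R x) (fun _ => 1) / (2 * R) ^ d
  homogeneity_upper : ∀ R, R₀ ≤ R → ∀ x ∈ G.domain,
    G.Msq (G.box R x) (fun _ => 1) / (2 * R) ^ d ≤ σ * ρ
  locality : ∀ x y, G.Adj x y → eDist x y < R₀
  boundary_density : ∀ y ∈ Γ, ∃ x ∈ G.N, x ∈ Γ ∧ eDist x y < R₀
  connectivity : ∀ R, R₀ ≤ R → ∀ x ∈ G.domain, ∃ A : (Fin d → ℝ) → (Fin d → ℝ) → Prop,
    (∀ a b, A a b → G.Adj a b) ∧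
    (∀ a b, G.Adj a b → (a ∈ G.box R x ∨ b ∈ G.box R x) → A a b) ∧
    (∀ a b, A a b → a ∈ G.box (R + R₀) x ∧ b ∈ G.box (R + R₀) x) ∧
    (∀ a b a' b', A a b → A a' b' → Relation.ReflTransGen A a a')

/-- The Friedrichs inequality of Lemma 3.2 holds with constant `μ`. -/
def Friedrichs (G : SpatialNetwork d) (Γ : Set (Fin d → ℝ)) (R₀ μ : ℝ) : Prop :=
  ∀ R, R₀ ≤ R → ∀ x ∈ G.domain, (∃ z ∈ G.N, z ∈ Γ ∧ z ∈ G.box R x) →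
    ∀ v, G.memV Γ v →
      G.Mnorm (G.box R x) v ≤ μ * R * G.Lnorm (G.box (R + R₀) x) v

/-- The Poincaré inequality of Lemma 3.2 holds with constant `μ`. -/
def Poincare (G : SpatialNetwork d) (R₀ μ : ℝ) : Prop :=
  ∀ R, R₀ ≤ R → ∀ x ∈ G.domain, ∀ v : (Fin d → ℝ) → ℝ, ∃ c : ℝ,
    G.Mnorm (G.box R x) (fun z => v z - c) ≤ μ * R * G.Lnorm (G.box (R + R₀) x) v

end SpatialNetwork

end NetPaper

open NetPaper NetPaper.SpatialNetwork

/-- **Discrete product rule (inequality (4.4)).**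
If `0 ≤ φ ≤ 1` and `|φ(x) − φ(y)| ≤ H⁻¹|x − y|` for all adjacent nodes
`x ∼ y`, then `|vφ|²_{L,ω} ≤ 2(H⁻²|v|²_{M,ω} + |v|²_{L,ω})` for every
`v : N → ℝ` and every `ω ⊆ Ω`. -/
theorem discrete_product_rule
    {d : ℕ} (G : SpatialNetwork d) (ω : Set (Fin d → ℝ)) (H : ℝ) (hH : 0 < H)
    (φ : (Fin d → ℝ) → ℝ)
    (hφ01 : ∀ z, 0 ≤ φ z ∧ φ z ≤ 1)
    (hφlip : ∀ x y, G.Adj x y → |φ x - φ y| ≤ H⁻¹ * eDist x y)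
    (v : (Fin d → ℝ) → ℝ) :
    G.Lsq ω (fun z => v z * φ z) ≤ 2 * (H⁻¹ ^ 2 * G.Msq ω v + G.Lsq ω v) := by
  have epos : ∀ x y, G.Adj x y → 0 < eDist x y := by
    intro x y hxy
    obtain ⟨i, hi⟩ := Function.ne_iff.mp (G.adj_ne x y hxy)
    apply Real.sqrt_pos.mpr
    apply Finset.sum_pos' (fun j _ => sq_nonneg _)
    refine ⟨i, Finset.mem_univ i, ?_⟩
    have : x i - y i ≠ 0 := sub_ne_zero.mpr hi
    positivity
  have main : ∀ x ∈ G.nodes ω,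
      (1 / 2 : ℝ) * ∑ y ∈ G.nbhd x, (v x * φ x - v y * φ y) ^ 2 / eDist x y ≤
      2 * (H⁻¹ ^ 2 * (G.mass x * v x * v x)) +
        2 * ((1 / 2 : ℝ) * ∑ y ∈ G.nbhd x, (v x - v y) ^ 2 / eDist x y) := by
    intro x hx
    have hterm : ∀ y ∈ G.nbhd x,
        (1 / 2 : ℝ) * ((v x * φ x - v y * φ y) ^ 2 / eDist x y) ≤
        H⁻¹ ^ 2 * (v x * v x) * eDist x y + (v x - v y) ^ 2 / eDist x y := by
      intro y hy
      have hadj : G.Adj x y := (Finset.mem_filter.mp hy).2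
      have he : 0 < eDist x y := epos x y hadj
      set e := eDist x y with hedef
      have hφ : (φ x - φ y) ^ 2 ≤ H⁻¹ ^ 2 * e ^ 2 := by
        have h1 := hφlip x y hadj
        have h2 : |φ x - φ y| ^ 2 ≤ (H⁻¹ * e) ^ 2 :=
          pow_le_pow_left₀ (abs_nonneg _) h1 2
        calc (φ x - φ y) ^ 2 = |φ x - φ y| ^ 2 := (sq_abs _).symm
          _ ≤ (H⁻¹ * e) ^ 2 := h2
          _ = H⁻¹ ^ 2 * e ^ 2 := by ring
      have hφy := hφ01 y
      have key : (v x * φ x - v y * φ y) ^ 2 ≤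
          2 * (H⁻¹ ^ 2 * v x ^ 2 * e ^ 2) + 2 * (v x - v y) ^ 2 := by
        have h1 : (v x * (φ x - φ y)) ^ 2 ≤ H⁻¹ ^ 2 * v x ^ 2 * e ^ 2 := by
          have := mul_le_mul_of_nonneg_left hφ (sq_nonneg (v x))
          calc (v x * (φ x - φ y)) ^ 2 = v x ^ 2 * (φ x - φ y) ^ 2 := by ring
            _ ≤ v x ^ 2 * (H⁻¹ ^ 2 * e ^ 2) := this
            _ = H⁻¹ ^ 2 * v x ^ 2 * e ^ 2 := by ring
        have h2 : (φ y * (v x - v y)) ^ 2 ≤ (v x - v y) ^ 2 := by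
          have hs : φ y ^ 2 ≤ 1 := by nlinarith [hφy.1, hφy.2]
          calc (φ y * (v x - v y)) ^ 2 = φ y ^ 2 * (v x - v y) ^ 2 := by ring
            _ ≤ 1 * (v x - v y) ^ 2 := mul_le_mul_of_nonneg_right hs (sq_nonneg _)
            _ = (v x - v y) ^ 2 := one_mul _
        nlinarith [sq_nonneg (v x * (φ x - φ y) - φ y * (v x - v y))]
      have hdiv : (v x * φ x - v y * φ y) ^ 2 / e ≤
          2 * (H⁻¹ ^ 2 * (v x * v x) * e) + 2 * ((v x - v y) ^ 2 / e) := by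
        rw [div_le_iff₀ he]
        calc (v x * φ x - v y * φ y) ^ 2
            ≤ 2 * (H⁻¹ ^ 2 * v x ^ 2 * e ^ 2) + 2 * (v x - v y) ^ 2 := key
          _ = (2 * (H⁻¹ ^ 2 * (v x * v x) * e) + 2 * ((v x - v y) ^ 2 / e)) * e := by
              field_simp
      linarith
    calc (1 / 2 : ℝ) * ∑ y ∈ G.nbhd x, (v x * φ x - v y * φ y) ^ 2 / eDist x y
        = ∑ y ∈ G.nbhd x, (1 / 2 : ℝ) * ((v x * φ x - v y * φ y) ^ 2 / eDist x y) := by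
          rw [Finset.mul_sum]
      _ ≤ ∑ y ∈ G.nbhd x,
            (H⁻¹ ^ 2 * (v x * v x) * eDist x y + (v x - v y) ^ 2 / eDist x y) :=
          Finset.sum_le_sum hterm
      _ = H⁻¹ ^ 2 * (v x * v x) * ∑ y ∈ G.nbhd x, eDist x y +
            ∑ y ∈ G.nbhd x, (v x - v y) ^ 2 / eDist x y := by
          rw [Finset.sum_add_distrib, ← Finset.mul_sum]
      _ = 2 * (H⁻¹ ^ 2 * (G.mass x * v x * v x)) +
            2 * ((1 / 2 : ℝ) * ∑ y ∈ G.nbhd x, (v x - v y) ^ 2 / eDist x y) := by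
          unfold SpatialNetwork.mass; ring
  calc G.Lsq ω (fun z => v z * φ z)
      = ∑ x ∈ G.nodes ω,
          (1 / 2 : ℝ) * ∑ y ∈ G.nbhd x, (v x * φ x - v y * φ y) ^ 2 / eDist x y := rfl
    _ ≤ ∑ x ∈ G.nodes ω,
          (2 * (H⁻¹ ^ 2 * (G.mass x * v x * v x)) +
            2 * ((1 / 2 : ℝ) * ∑ y ∈ G.nbhd x, (v x - v y) ^ 2 / eDist x y)) :=
        Finset.sum_le_sum main
    _ = 2 * (H⁻¹ ^ 2 * G.Msq ω v + G.Lsq ω v) := by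
        unfold SpatialNetwork.Lsq SpatialNetwork.Msq SpatialNetwork.Mbil
        rw [Finset.sum_add_distrib, ← Finset.mul_sum, ← Finset.mul_sum,
          ← Finset.mul_sum, ← mul_add]
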